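/- arXiv:2410.08139 — 2 statements merged into one kernel-verified Lean document; each statement's English description precedes it below -/
import Mathlib

section
/- Let d be a positive even integer, let S be a simplicial complex on a finite vertex set V disjoint from the set [d] = {1, ..., d}, and suppose every face of S has cardinality at most d/2. Define Γ = { F ∪ G : F ∈ S, G ⊆ {1, ..., d - 2|F|} }. Then Γ is a simplicial complex, and for every i ≥ 0 the number of faces of Γ of cardinality i equals Σ_{j=0}^{i} f_{j-1}(S) · C(d - 2j, i - j), where f_{j-1}(S) is the number of faces of S of cardinality j and C(a,b) is the binomial coefficient. -/
/-- Let `d` be a positive even integer and `S` a simplicial complex on a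
finite vertex set disjoint from `[d] = {1, ..., d}` whose faces all have cardinality at
most `d/2`.  Then `Γ = { F ∪ G : F ∈ S, G ⊆ {1, ..., d - 2|F|} }` is a simplicial
complex, and for every `i ≥ 0` the number of faces of `Γ` of cardinality `i` equals
`∑_{j=0}^{i} f_{j-1}(S) · C(d - 2j, i - j)`. -/
theorem boolean_decomposition_face_count (d : ℕ) (hd : 0 < d) (hde : Even d)
    (S : Finset (Finset ℕ))
    (hSempty : ∅ ∈ S) (hSdown : ∀ F ∈ S, ∀ G ⊆ F, G ∈ S)
    (hdisj : ∀ F ∈ S, ∀ v ∈ F, v ∉ Finset.Icc 1 d)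
    (hdim : ∀ F ∈ S, F.card ≤ d / 2)
    (Γ : Finset (Finset ℕ))
    (hΓ : Γ = S.biUnion (fun F =>
      (Finset.Icc 1 (d - 2 * F.card)).powerset.image (fun G => F ∪ G))) :
    (∅ ∈ Γ ∧ ∀ F ∈ Γ, ∀ G ⊆ F, G ∈ Γ) ∧
    ∀ i : ℕ, (Γ.filter (fun A => A.card = i)).card
      = ∑ j ∈ Finset.range (i + 1),
          (S.filter (fun F => F.card = j)).card * Nat.choose (d - 2 * j) (i - j) := by
  have hFdisj : ∀ F ∈ S, Disjoint F (Finset.Icc 1 d) := fun F hF =>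
    Finset.disjoint_left.2 (fun a haF ha => hdisj F hF a haF ha)
  have hsub : ∀ m : ℕ, Finset.Icc 1 m ⊆ Finset.Icc 1 d → True := fun _ _ => trivial
  have hIccsub : ∀ F : Finset ℕ, Finset.Icc 1 (d - 2 * F.card) ⊆ Finset.Icc 1 d :=
    fun F => Finset.Icc_subset_Icc_right (Nat.sub_le _ _)
  have hdecomp : ∀ F ∈ S, ∀ G ⊆ Finset.Icc 1 d, (F ∪ G) \ Finset.Icc 1 d = F := by
    intro F hF G hG
    ext x
    simp only [Finset.mem_sdiff, Finset.mem_union]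
    constructor
    · rintro ⟨h1 | h1, h2⟩
      · exact h1
      · exact absurd (hG h1) h2
    · intro hx
      exact ⟨Or.inl hx, fun hc => hdisj F hF x hx hc⟩
  constructor
  · constructor
    · rw [hΓ]
      exact Finset.mem_biUnion.2 ⟨∅, hSempty,
        Finset.mem_image.2 ⟨∅, by simp, by simp⟩⟩
    · intro A hA B hBA
      rw [hΓ] at hA ⊢
      obtain ⟨F, hF, hA⟩ := Finset.mem_biUnion.1 hA
      obtain ⟨G, hG, rfl⟩ := Finset.mem_image.1 hA
      rw [Finset.mem_powerset] at hG
      have hF'sub : B \ Finset.Icc 1 d ⊆ F := by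
        intro x hx
        rw [Finset.mem_sdiff] at hx
        rcases Finset.mem_union.1 (hBA hx.1) with h | h
        · exact h
        · exact absurd (hIccsub F (hG h)) hx.2
      refine Finset.mem_biUnion.2 ⟨B \ Finset.Icc 1 d, hSdown F hF _ hF'sub, ?_⟩
      refine Finset.mem_image.2 ⟨B ∩ Finset.Icc 1 d, ?_, ?_⟩
      · rw [Finset.mem_powerset]
        intro x hx
        rw [Finset.mem_inter] at hx
        have hxG : x ∈ G := by
          rcases Finset.mem_union.1 (hBA hx.1) with h | h
          · exact absurd hx.2 (hdisj F hF x h)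
          · exact h
        have := hG hxG
        rw [Finset.mem_Icc] at this ⊢
        refine ⟨this.1, le_trans this.2 ?_⟩
        have : (B \ Finset.Icc 1 d).card ≤ F.card := Finset.card_le_card hF'sub
        omega
      · exact Finset.sdiff_union_inter B (Finset.Icc 1 d)
  · intro i
    rw [hΓ, Finset.filter_biUnion]
    rw [Finset.card_biUnion ?hpair]
    case hpair =>
      intro F1 h1 F2 h2 hne
      refine Finset.disjoint_left.2 ?_
      intro A hA1 hA2
      simp only [Finset.mem_filter, Finset.mem_image, Finset.mem_powerset] at hA1 hA2
      obtain ⟨⟨G1, hG1, rfl⟩, -⟩ := hA1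
      obtain ⟨⟨G2, hG2, hEq⟩, -⟩ := hA2
      apply hne
      have e1 := hdecomp F1 h1 G1 ((hG1.trans (hIccsub F1)))
      have e2 := hdecomp F2 h2 G2 ((hG2.trans (hIccsub F2)))
      rw [← e1, ← hEq, e2]
    have hterm : ∀ F ∈ S,
        (((Finset.Icc 1 (d - 2 * F.card)).powerset.image (fun G => F ∪ G)).filter
          (fun A => A.card = i)).card
        = if F.card ≤ i then (d - 2 * F.card).choose (i - F.card) else 0 := by
      intro F hF
      have hinj : Set.InjOn (fun G => F ∪ G)
          ((Finset.Icc 1 (d - 2 * F.card)).powerset : Set (Finset ℕ)) := by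
        intro G1 hG1 G2 hG2 h
        simp only [Finset.coe_powerset, Set.mem_preimage, Set.mem_powerset_iff,
          Finset.coe_subset] at hG1 hG2
        have k1 : (F ∪ G1) ∩ Finset.Icc 1 d = G1 := by
          rw [Finset.union_inter_distrib_right,
            (Finset.disjoint_iff_inter_eq_empty.1 (hFdisj F hF)),
            Finset.inter_eq_left.2 (hG1.trans (hIccsub F)), Finset.empty_union]
        have k2 : (F ∪ G2) ∩ Finset.Icc 1 d = G2 := by
          rw [Finset.union_inter_distrib_right,
            (Finset.disjoint_iff_inter_eq_empty.1 (hFdisj F hF)),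
            Finset.inter_eq_left.2 (hG2.trans (hIccsub F)), Finset.empty_union]
        rw [← k1, ← k2]
        simp only at h
        rw [h]
      rw [Finset.filter_image, Finset.card_image_of_injOn
        (hinj.mono (by intro x hx; exact Finset.mem_coe.2 (Finset.mem_of_mem_filter x hx)))]
      have hcardU : ∀ G ∈ (Finset.Icc 1 (d - 2 * F.card)).powerset,
          (F ∪ G).card = F.card + G.card := by
        intro G hG
        rw [Finset.mem_powerset] at hG
        exact Finset.card_union_of_disjoint
          (Finset.disjoint_of_subset_right (hG.trans (hIccsub F)) (hFdisj F hF))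
      by_cases hle : F.card ≤ i
      · rw [if_pos hle]
        have : ((Finset.Icc 1 (d - 2 * F.card)).powerset.filter
            (fun G => (F ∪ G).card = i))
            = (Finset.Icc 1 (d - 2 * F.card)).powerset.filter
            (fun G => G.card = i - F.card) := by
          apply Finset.filter_congr
          intro G hG
          rw [hcardU G hG]
          omega
        rw [this, ← Finset.powersetCard_eq_filter, Finset.card_powersetCard,
          Nat.card_Icc, Nat.add_sub_cancel]
      · rw [if_neg hle]
        rw [Finset.card_eq_zero, Finset.filter_eq_empty_iff]
        intro G hG
        rw [hcardU G hG]
        omega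
    rw [Finset.sum_congr rfl hterm, ← Finset.sum_filter]
    rw [← Finset.sum_fiberwise_of_maps_to (g := Finset.card)
      (t := Finset.range (i + 1)) (fun F hF => Finset.mem_range.2
        (Nat.lt_succ_of_le (Finset.mem_filter.1 hF).2))]
    refine Finset.sum_congr rfl ?_
    intro j hj
    rw [Finset.mem_range] at hj
    have : (S.filter (fun F => F.card ≤ i)).filter (fun F => F.card = j)
        = S.filter (fun F => F.card = j) := by
      rw [Finset.filter_filter]
      apply Finset.filter_congr
      intro F hF
      omega
    rw [this]
    rw [Finset.sum_congr rfl (fun F hF => by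
      rw [(Finset.mem_filter.1 hF).2])]
    rw [Finset.sum_const, smul_eq_mul]
end

section
/- Let d be a positive even integer, let S be a simplicial complex on a finite vertex set V disjoint from the set [d] = {1, ..., d}, and suppose every face of S has cardinality at most d/2. Define Γ = { F ∪ G : F ∈ S, G ⊆ {1, ..., d - 2|F|} }. Then Σ_{i=0}^{d} f_{i-1}(Γ) x^i = Σ_{j=0}^{d/2} f_{j-1}(S) x^j (x+1)^{d-2j} as polynomials. Consequently, if the coefficient vector (f_{-1}(Γ), ..., f_{d-1}(Γ)) is the h-vector of a palindromic polynomial of degree d, then the gamma vector of that polynomial equals the f-vector of S. -/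
open Polynomial

lemma bd_coeff_term (b : ℝ) (m n k : ℕ) :
    (C b * X ^ m * (X + 1) ^ n).coeff k = if m ≤ k then b * (n.choose (k - m) : ℝ) else 0 := by
  rw [mul_right_comm, Polynomial.coeff_mul_X_pow']
  split_ifs with h
  · rw [Polynomial.coeff_C_mul, Polynomial.coeff_X_add_one_pow]
  · rfl

lemma bd_pow_sum (s : Finset ℕ) :
    ∑ G ∈ s.powerset, (X : Polynomial ℝ) ^ G.card = (X + 1) ^ s.card := by
  induction s using Finset.induction_on with
  | empty => simp
  | insert a s ha ih =>
    rw [Finset.sum_powerset_insert ha, Finset.card_insert_of_notMem ha]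
    have : ∀ t ∈ s.powerset, (X : Polynomial ℝ) ^ (insert a t).card = X * X ^ t.card := by
      intro t ht
      rw [Finset.card_insert_of_notMem (fun h => ha ((Finset.mem_powerset.mp ht) h)),
        pow_succ, mul_comm]
    rw [Finset.sum_congr rfl this, ← Finset.mul_sum, ih]
    ring

lemma bd_gamma_unique (d : ℕ) (a : ℕ → ℝ)
    (h0 : (∑ j ∈ Finset.range (d/2+1), C (a j) * X^j * (X+1)^(d-2*j)) = (0 : Polynomial ℝ)) :
    ∀ j ≤ d/2, a j = 0 := by
  intro j
  induction j using Nat.strong_induction_on with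
  | _ j ih =>
    intro hj
    have hc := congrArg (fun p => Polynomial.coeff p j) h0
    simp only [Polynomial.finset_sum_coeff, bd_coeff_term, Polynomial.coeff_zero] at hc
    rw [Finset.sum_eq_single j] at hc
    · simpa using hc
    · intro k hk hkj
      rcases lt_or_gt_of_ne hkj with hlt | hgt
      · simp [ih k hlt (le_trans (le_of_lt hlt) hj)]
      · simp [Nat.not_le_of_lt hgt]
    · intro hjm
      exact absurd (Finset.mem_range.mpr (Nat.lt_succ_of_le hj)) hjm


/-- With `S` and `Γ = { F ∪ G : F ∈ S, G ⊆ {1, ..., d - 2|F|} }` as in the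
Boolean decomposition, one has the polynomial identity
`∑_{i=0}^{d} f_{i-1}(Γ) x^i = ∑_{j=0}^{d/2} f_{j-1}(S) x^j (x+1)^{d-2j}`.
Consequently, if `(f_{-1}(Γ), ..., f_{d-1}(Γ))` is the coefficient vector of a
palindromic polynomial `h` of degree `d`, then the gamma vector of `h` equals the
f-vector of `S`. -/
theorem boolean_decomposition_gamma (d : ℕ) (hd : 0 < d) (hde : Even d)
    (S : Finset (Finset ℕ))
    (hSempty : ∅ ∈ S) (hSdown : ∀ F ∈ S, ∀ G ⊆ F, G ∈ S)
    (hdisj : ∀ F ∈ S, ∀ v ∈ F, v ∉ Finset.Icc 1 d)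
    (hdim : ∀ F ∈ S, F.card ≤ d / 2)
    (Γ : Finset (Finset ℕ))
    (hΓ : Γ = S.biUnion (fun F =>
      (Finset.Icc 1 (d - 2 * F.card)).powerset.image (fun G => F ∪ G))) :
    ((∑ i ∈ Finset.range (d + 1),
        C (((Γ.filter (fun A => A.card = i)).card : ℝ)) * X ^ i)
      = ∑ j ∈ Finset.range (d / 2 + 1),
          C (((S.filter (fun F => F.card = j)).card : ℝ)) * X ^ j * (X + 1) ^ (d - 2 * j)) ∧
    (∀ h : Polynomial ℝ,
      (∀ k ≤ d, h.coeff k = h.coeff (d - k)) →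
      (∀ i ≤ d, h.coeff i = ((Γ.filter (fun A => A.card = i)).card : ℝ)) →
      ∀ γ : ℕ → ℝ,
        h = ∑ j ∈ Finset.range (d / 2 + 1), C (γ j) * X ^ j * (X + 1) ^ (d - 2 * j) →
        ∀ j ≤ d / 2, γ j = ((S.filter (fun F => F.card = j)).card : ℝ)) := by
  have hFdisj : ∀ F ∈ S, Disjoint F (Finset.Icc 1 d) := fun F hF =>
    Finset.disjoint_left.mpr (hdisj F hF)
  have hIccsub : ∀ m : ℕ, Finset.Icc 1 (d - 2*m) ⊆ Finset.Icc 1 d :=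
    fun m => Finset.Icc_subset_Icc_right (Nat.sub_le d _)
  have hrecF : ∀ F ∈ S, ∀ G ⊆ Finset.Icc 1 (d - 2*F.card), (F ∪ G) \ Finset.Icc 1 d = F := by
    intro F hF G hG
    rw [Finset.union_sdiff_distrib, Finset.sdiff_eq_self_of_disjoint (hFdisj F hF),
      Finset.sdiff_eq_empty_iff_subset.mpr (hG.trans (hIccsub F.card)), Finset.union_empty]
  have hrecG : ∀ F ∈ S, ∀ G ⊆ Finset.Icc 1 (d - 2*F.card), (F ∪ G) ∩ Finset.Icc 1 d = G := by
    intro F hF G hG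
    rw [Finset.union_inter_distrib_right, Finset.disjoint_iff_inter_eq_empty.mp (hFdisj F hF),
      Finset.inter_eq_left.mpr (hG.trans (hIccsub F.card)), Finset.empty_union]
  have hcardFG : ∀ F ∈ S, ∀ G ⊆ Finset.Icc 1 (d - 2*F.card), (F ∪ G).card = F.card + G.card := by
    intro F hF G hG
    exact Finset.card_union_of_disjoint ((hFdisj F hF).mono_right (hG.trans (hIccsub F.card)))
  have h2F : ∀ F ∈ S, 2 * F.card ≤ d := by
    intro F hF
    have := hdim F hF
    omega
  have hΓcard : ∀ A ∈ Γ, A.card ≤ d := by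
    intro A hA
    rw [hΓ] at hA
    simp only [Finset.mem_biUnion, Finset.mem_image, Finset.mem_powerset] at hA
    obtain ⟨F, hF, G, hG, rfl⟩ := hA
    rw [hcardFG F hF G hG]
    have h1 := h2F F hF
    have h2 : G.card ≤ d - 2*F.card :=
      le_trans (Finset.card_le_card hG) (by simp [Nat.card_Icc])
    omega
  have step1 : (∑ i ∈ Finset.range (d + 1),
      C (((Γ.filter (fun A => A.card = i)).card : ℝ)) * X ^ i)
      = ∑ A ∈ Γ, (X : Polynomial ℝ) ^ A.card := by
    rw [← Finset.sum_fiberwise_of_maps_to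
      (fun A hA => Finset.mem_range.mpr (Nat.lt_succ_of_le (hΓcard A hA)))
      (fun A => (X : Polynomial ℝ) ^ A.card)]
    refine Finset.sum_congr rfl fun i _ => ?_
    rw [Finset.sum_congr rfl (fun A hA => by rw [(Finset.mem_filter.mp hA).2]),
      Finset.sum_const, nsmul_eq_mul]
    simp
  have step2 : (∑ j ∈ Finset.range (d / 2 + 1),
      C (((S.filter (fun F => F.card = j)).card : ℝ)) * X ^ j * (X + 1) ^ (d - 2 * j))
      = ∑ F ∈ S, (X : Polynomial ℝ) ^ F.card * (X + 1) ^ (d - 2 * F.card) := by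
    rw [← Finset.sum_fiberwise_of_maps_to
      (fun F hF => Finset.mem_range.mpr (Nat.lt_succ_of_le (hdim F hF)))
      (fun F => (X : Polynomial ℝ) ^ F.card * (X + 1) ^ (d - 2 * F.card))]
    refine Finset.sum_congr rfl fun j _ => ?_
    rw [Finset.sum_congr rfl (fun F hF => by rw [(Finset.mem_filter.mp hF).2]),
      Finset.sum_const, nsmul_eq_mul]
    simp [mul_assoc]
  have hpd : (↑S : Set (Finset ℕ)).PairwiseDisjoint (fun F =>
      (Finset.Icc 1 (d - 2 * F.card)).powerset.image (fun G => F ∪ G)) := by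
    intro F hF F' hF' hne
    simp only [Function.onFun]
    rw [Finset.disjoint_left]
    rintro A hA hA'
    simp only [Finset.mem_image, Finset.mem_powerset] at hA hA'
    obtain ⟨G, hG, rfl⟩ := hA
    obtain ⟨G', hG', hEq⟩ := hA'
    have h1 := hrecF F hF G hG
    have h2 := hrecF F' hF' G' hG'
    rw [hEq] at h2
    exact hne (h1.symm.trans h2)
  have step3 : ∑ A ∈ Γ, (X : Polynomial ℝ) ^ A.card
      = ∑ F ∈ S, ∑ G ∈ (Finset.Icc 1 (d - 2 * F.card)).powerset,
          (X : Polynomial ℝ) ^ (F ∪ G).card := by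
    rw [hΓ, Finset.sum_biUnion hpd]
    refine Finset.sum_congr rfl fun F hF => ?_
    refine Finset.sum_image fun G hG G' hG' hEq => ?_
    have h1 := hrecG F hF G (Finset.mem_powerset.mp hG)
    have h2 := hrecG F hF G' (Finset.mem_powerset.mp hG')
    rw [hEq] at h1
    exact (h2.symm.trans h1).symm
  have step5 : ∀ F ∈ S, ∑ G ∈ (Finset.Icc 1 (d - 2 * F.card)).powerset,
      (X : Polynomial ℝ) ^ (F ∪ G).card
      = X ^ F.card * (X + 1) ^ (d - 2 * F.card) := by
    intro F hF
    have hc : ∀ G ∈ (Finset.Icc 1 (d - 2 * F.card)).powerset,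
        (X : Polynomial ℝ) ^ (F ∪ G).card = X ^ F.card * X ^ G.card := by
      intro G hG
      rw [hcardFG F hF G (Finset.mem_powerset.mp hG), pow_add]
    rw [Finset.sum_congr rfl hc, ← Finset.mul_sum, bd_pow_sum]
    congr 1
    simp [Nat.card_Icc]
  have part1 := step1.trans (step3.trans ((Finset.sum_congr rfl step5).trans step2.symm))
  refine ⟨part1, ?_⟩
  intro h hpal hcoef γ hγ
  have hhP : h = ∑ i ∈ Finset.range (d + 1),
      C (((Γ.filter (fun A => A.card = i)).card : ℝ)) * X ^ i := by
    ext k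
    by_cases hk : k ≤ d
    · rw [hcoef k hk]
      simp [Polynomial.finset_sum_coeff, Polynomial.coeff_C_mul, Polynomial.coeff_X_pow,
        Finset.sum_ite_eq, Nat.lt_succ_iff, hk]
    · have hdk : d < k := not_le.mp hk
      have h1 : (∑ j ∈ Finset.range (d/2+1),
          C (γ j) * X^j * (X+1)^(d-2*j)).coeff k = 0 := by
        rw [Polynomial.finset_sum_coeff]
        refine Finset.sum_eq_zero fun j hj => ?_
        rw [bd_coeff_term]
        split_ifs with hjk
        · have hj' : j ≤ d/2 := Nat.lt_succ_iff.mp (Finset.mem_range.mp hj)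
          have hlt : d - 2*j < k - j := by omega
          rw [Nat.choose_eq_zero_of_lt hlt, Nat.cast_zero, mul_zero]
        · rfl
      have h2 : ((∑ i ∈ Finset.range (d + 1),
          C (((Γ.filter (fun A => A.card = i)).card : ℝ)) * X ^ i : Polynomial ℝ)).coeff k = 0 := by
        rw [Polynomial.finset_sum_coeff]
        refine Finset.sum_eq_zero fun i hi => ?_
        rw [Polynomial.coeff_C_mul, Polynomial.coeff_X_pow,
          if_neg (by have := Finset.mem_range.mp hi; omega), mul_zero]
      rw [hγ, h1, h2]
  have hexp : (∑ j ∈ Finset.range (d/2+1), C (γ j) * X^j * (X+1)^(d-2*j))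
      = ∑ j ∈ Finset.range (d/2+1),
          C (((S.filter (fun F => F.card = j)).card : ℝ)) * X^j * (X+1)^(d-2*j) := by
    rw [← hγ, hhP, part1]
  have hzero : (∑ j ∈ Finset.range (d/2+1),
      C (γ j - ((S.filter (fun F => F.card = j)).card : ℝ)) * X^j * (X+1)^(d-2*j))
      = (0 : Polynomial ℝ) := by
    have hsub : ∀ j ∈ Finset.range (d/2+1),
        C (γ j - ((S.filter (fun F => F.card = j)).card : ℝ)) * X^j * (X+1)^(d-2*j)
        = C (γ j) * X^j * (X+1)^(d-2*j)
          - C (((S.filter (fun F => F.card = j)).card : ℝ)) * X^j * (X+1)^(d-2*j) := by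
      intro j _
      rw [map_sub, sub_mul, sub_mul]
    rw [Finset.sum_congr rfl hsub, Finset.sum_sub_distrib, hexp, sub_self]
  intro j hj
  have := bd_gamma_unique d _ hzero j hj
  linarith
end
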